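/- arXiv:1001.1766 — 2 statements merged into one kernel-verified Lean document; each statement's English description precedes it below -/
import Mathlib

section
/- Let K ≥ 1 and L ≥ 2 be integers, S = KL, and let M₀ be the (S−1)×S matrix with rows indexed by 0 ≤ s ≤ S−2 and columns by pairs (k,ℓ), 0 ≤ k ≤ K−1, 0 ≤ ℓ ≤ L−1, with (s,(k,ℓ)) entry equal to (d/dz)^s(z^k e^{ℓz})(0). Let p_{ℓ,k} be the coefficients of the Hermite–Padé approximants of type I for 1, e^z, …, e^{(L−1)z} with parameters n₀ = ⋯ = n_{L−1} = K, i.e. p_{ℓ,k} = Σ_{γ ∈ Λ(ℓ,k)} ∏_{p=0, p≠ℓ}^{L−1} ((−1)^{γ_p}/(ℓ−p)^{γ_p+K})·C(γ_p+K−1, K−1). Then M₀ has rank S−1, and the vector x with components x_{(k,ℓ)} = p_{ℓ,k}/k! is a nonzero vector in the kernel of M₀, i.e. Σ_{ℓ=0}^{L−1} Σ_{k=0}^{K−1} (p_{ℓ,k}/k!)·(d/dz)^s(z^k e^{ℓz})(0) = 0 for all 0 ≤ s ≤ S−2. -/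
noncomputable section
open Finset


/-- The `(s,(k,ℓ))` entry of the matrix `M₀`: the `s`-th derivative of `Φ_{k,ℓ}(z) = z^k e^{ℓz}`
at `0`, namely `C(s,k) k! ℓ^{s−k}` if `k ≤ s` and `0` otherwise (with `0^0 = 1`). -/
def m0Entry (s k ℓ : ℕ) : ℕ :=
  if k ≤ s then s.choose k * k.factorial * ℓ ^ (s - k) else 0

/-- The `(S−1) × S` matrix `M₀` (`S = KL`), with rows `0 ≤ s ≤ S−2` and columns indexed by
pairs `(k,ℓ)`, `0 ≤ k ≤ K−1`, `0 ≤ ℓ ≤ L−1`, viewed over `ℚ`. -/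
def m0Mat (K L : ℕ) : Matrix (Fin (K * L - 1)) (Fin K × Fin L) ℚ :=
  Matrix.of fun s kl => ((m0Entry (s : ℕ) (kl.1 : ℕ) (kl.2 : ℕ) : ℕ) : ℚ)

/-- `Λ(ℓ,k)` for `m = L − 1` and `n₀ = ⋯ = n_{L−1} = K`: multi-indices `γ = (γ_p)_{p ≠ ℓ}`
of nonnegative integers with `∑_{p ≠ ℓ} γ_p = K − k − 1`, encoded as functions
`γ : Fin L → ℕ` with `γ ℓ = 0`. -/
def lambdaSet (K L : ℕ) (ℓ : Fin L) (k : ℕ) : Finset (Fin L → ℕ) :=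
  (Finset.Nat.antidiagonalTuple L (K - k - 1)).filter fun γ => γ ℓ = 0

/-- The coefficients `p_{ℓ,k}` of the Hermite–Padé approximants of type I for
`1, e^z, …, e^{(L−1)z}` with parameters `n₀ = ⋯ = n_{L−1} = K`. -/
def hpCoeff (K L : ℕ) (ℓ : Fin L) (k : ℕ) : ℚ :=
  ∑ γ ∈ lambdaSet K L ℓ k, ∏ p ∈ Finset.univ.erase ℓ,
    ((-1) ^ (γ p) / (((ℓ : ℕ) : ℚ) - ((p : ℕ) : ℚ)) ^ (γ p + K) *
      ((γ p + K - 1).choose (K - 1) : ℚ))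




/-- Inverse of `(1 - C a * X)^d` in `ℚ⟦X⟧`. -/
def invSer (a : ℚ) (d : ℕ) : PowerSeries ℚ :=
  PowerSeries.rescale a (PowerSeries.invOneSubPow ℚ d).val

lemma invSer_mul_eq_one (a : ℚ) (d : ℕ) :
    invSer a d * (1 - PowerSeries.C a * PowerSeries.X) ^ d = 1 := by
  have h : (1 - PowerSeries.C a * PowerSeries.X) ^ d
      = PowerSeries.rescale a ((1 - PowerSeries.X) ^ d) := by
    rw [map_pow, map_sub, map_one, PowerSeries.rescale_X]
  rw [h, invSer, ← map_mul, ← PowerSeries.invOneSubPow_inv_eq_one_sub_pow,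
    (PowerSeries.invOneSubPow ℚ d).val_inv, map_one]

lemma coeff_invSer (a : ℚ) (d : ℕ) (hd : 0 < d) (n : ℕ) :
    PowerSeries.coeff n (invSer a d) = a ^ n * (d - 1 + n).choose (d - 1) := by
  rw [invSer, PowerSeries.coeff_rescale,
    PowerSeries.invOneSubPow_val_eq_mk_sub_one_add_choose_of_pos ℚ d hd, PowerSeries.coeff_mk]

/-- The inverse series of `(C c + X)^d` for `c ≠ 0`. -/
def geomK (c : ℚ) (d : ℕ) : PowerSeries ℚ :=
  PowerSeries.mk fun n => (-1) ^ n / c ^ (n + d) * ((n + d - 1).choose (d - 1) : ℚ)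

lemma geomK_eq (c : ℚ) (hc : c ≠ 0) (d : ℕ) (hd : 0 < d) :
    geomK c d = PowerSeries.C (c⁻¹ ^ d) * invSer (-c⁻¹) d := by
  ext n
  rw [geomK, PowerSeries.coeff_mk, PowerSeries.coeff_C_mul, coeff_invSer _ _ hd]
  have h1 : d - 1 + n = n + d - 1 := by omega
  rw [h1, div_eq_mul_inv, ← inv_pow, mul_comm ((-1:ℚ)^n), neg_pow, inv_pow]
  ring

lemma geomK_mul_eq_one (c : ℚ) (hc : c ≠ 0) (d : ℕ) (hd : 0 < d) :
    geomK c d * (PowerSeries.C c + PowerSeries.X) ^ d = 1 := by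
  have key : (PowerSeries.C c + PowerSeries.X) ^ d
      = PowerSeries.C (c ^ d) * (1 - PowerSeries.C (-c⁻¹) * PowerSeries.X) ^ d := by
    rw [map_pow, ← mul_pow]
    congr 1
    rw [map_neg, neg_mul, sub_neg_eq_add, mul_add, mul_one, ← mul_assoc, ← map_mul,
      mul_inv_cancel₀ hc, map_one, one_mul]
  rw [geomK_eq c hc d hd, key, mul_mul_mul_comm, ← map_mul, ← mul_pow,
    inv_mul_cancel₀ hc, one_pow, map_one, one_mul, invSer_mul_eq_one]


def Hser (K L : ℕ) (ℓ : Fin L) : PowerSeries ℚ :=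
  ∏ p ∈ Finset.univ.erase ℓ, geomK (((ℓ : ℕ) : ℚ) - ((p : ℕ) : ℚ)) K

lemma coeff_Hser (K L : ℕ) (hK : 1 ≤ K) (ℓ : Fin L) (j : ℕ) (hj : j ≤ K - 1) :
    PowerSeries.coeff j (Hser K L ℓ) = hpCoeff K L ℓ (K - 1 - j) := by
  rw [Hser, PowerSeries.coeff_prod, hpCoeff]
  have hKj : K - (K - 1 - j) - 1 = j := by omega
  rw [lambdaSet, hKj]
  refine Finset.sum_nbij' (fun l => ⇑l) (fun γ => Finsupp.equivFunOnFinite.symm γ) ?_ ?_ ?_ ?_ ?_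
  · intro l hl
    simp only [Finset.mem_finsuppAntidiag] at hl
    simp only [Finset.mem_filter, Finset.Nat.mem_antidiagonalTuple]
    constructor
    · rw [← hl.1]
      rw [← Finset.sum_erase_add Finset.univ _ (Finset.mem_univ ℓ)]
      have hlℓ : l ℓ = 0 := by
        by_contra h
        exact (Finset.notMem_erase ℓ Finset.univ) (hl.2 (Finsupp.mem_support_iff.2 h))
      rw [hlℓ, add_zero]
    · by_contra h
      exact (Finset.notMem_erase ℓ Finset.univ) (hl.2 (Finsupp.mem_support_iff.2 h))
  · intro γ hγ
    simp only [Finset.mem_filter, Finset.Nat.mem_antidiagonalTuple] at hγ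
    simp only [Finset.mem_finsuppAntidiag]
    constructor
    · have : ∑ p ∈ Finset.univ.erase ℓ, γ p = ∑ p : Fin L, γ p - γ ℓ := by
        rw [← Finset.sum_erase_add Finset.univ _ (Finset.mem_univ ℓ)]; omega
      simpa [this, hγ.2] using hγ.1
    · intro p hp
      simp only [Finsupp.mem_support_iff, Finsupp.equivFunOnFinite_symm_apply_apply] at hp
      simp only [Finset.mem_erase, Finset.mem_univ, and_true]
      rintro rfl; exact hp hγ.2
  · intro l _; exact Finsupp.equivFunOnFinite.symm_apply_apply l
  · intro γ _; exact Finsupp.equivFunOnFinite.apply_symm_apply γ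
  · intro l _
    refine Finset.prod_congr rfl fun p _ => ?_
    rw [geomK, PowerSeries.coeff_mk]


lemma taylor_pow' (r : ℚ) (f : Polynomial ℚ) (n : ℕ) :
    Polynomial.taylor r (f ^ n) = (Polynomial.taylor r f) ^ n := by
  induction n with
  | zero => simpa using Polynomial.taylor_one r
  | succ n ih => rw [pow_succ, Polynomial.taylor_mul, ih, pow_succ]

lemma taylor_prod' {ι : Type*} (r : ℚ) (s : Finset ι) (f : ι → Polynomial ℚ) :
    Polynomial.taylor r (∏ i ∈ s, f i) = ∏ i ∈ s, Polynomial.taylor r (f i) := by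
  classical
  induction s using Finset.induction_on with
  | empty => simpa using Polynomial.taylor_one r
  | @insert _ _ h ih => rw [Finset.prod_insert h, Polynomial.taylor_mul, ih, Finset.prod_insert h]

lemma dvd_of_X_pow_dvd_taylor (r : ℚ) (g : Polynomial ℚ) (n : ℕ)
    (h : Polynomial.X ^ n ∣ Polynomial.taylor r g) :
    (Polynomial.X - Polynomial.C r) ^ n ∣ g := by
  obtain ⟨t, ht⟩ := h
  have hg : g = Polynomial.taylor (-r) (Polynomial.taylor r g) := by
    rw [Polynomial.taylor_taylor, neg_add_cancel]
    simp [Polynomial.taylor_apply]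
  rw [hg, ht, Polynomial.taylor_mul, taylor_pow', Polynomial.taylor_X, Polynomial.C_neg,
    ← sub_eq_add_neg]
  exact dvd_mul_right _ _

lemma reflect_X_sub_C_pow (a : ℚ) (m : ℕ) :
    Polynomial.reflect m ((Polynomial.X - Polynomial.C a) ^ m)
      = (1 - Polynomial.C a * Polynomial.X) ^ m := by
  induction m with
  | zero => simpa using Polynomial.reflect_monomial 0 0
  | succ m ih =>
    have h1 : Polynomial.reflect 1 (Polynomial.X - Polynomial.C a)
        = 1 - Polynomial.C a * Polynomial.X := by
      have : (Polynomial.X - Polynomial.C a : Polynomial ℚ)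
          = Polynomial.X ^ 1 + Polynomial.C (-a) * Polynomial.X ^ 0 := by
        simp [sub_eq_add_neg]
      rw [this, Polynomial.reflect_add, Polynomial.reflect_C_mul,
        Polynomial.reflect_monomial, Polynomial.reflect_monomial,
        Polynomial.revAt_le (le_refl 1), Polynomial.revAt_le (Nat.zero_le 1)]
      norm_num [Polynomial.revAt]
      ring
    have hsplit : m + 1 = 1 + m := by omega
    rw [pow_succ, mul_comm, hsplit,
      Polynomial.reflect_mul _ _ (by simp [Polynomial.natDegree_X_sub_C]) (by
        calc ((Polynomial.X - Polynomial.C a) ^ m).natDegree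
            ≤ m * 1 := by
              simpa [Polynomial.natDegree_X_sub_C] using
                Polynomial.natDegree_pow_le (p := Polynomial.X - Polynomial.C a) (n := m)
          _ = m := by ring),
      h1, ih, pow_add, pow_one]

lemma reflect_prod_pow {ι : Type*} [DecidableEq ι] (s : Finset ι) (K : ℕ) (a : ι → ℚ) :
    Polynomial.reflect (s.card * K) (∏ p ∈ s, (Polynomial.X - Polynomial.C (a p)) ^ K)
      = ∏ p ∈ s, (1 - Polynomial.C (a p) * Polynomial.X) ^ K := by
  induction s using Finset.induction_on with
  | empty => simpa using Polynomial.reflect_monomial 0 0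
  | @insert i s hi ih =>
    have hdeg : (∏ p ∈ s, (Polynomial.X - Polynomial.C (a p)) ^ K).natDegree ≤ s.card * K := by
      refine le_trans (Polynomial.natDegree_prod_le _ _) ?_
      refine le_trans (Finset.sum_le_sum (g := fun _ => K) fun p _ => ?_) (by simp [mul_comm])
      exact le_trans (Polynomial.natDegree_pow_le) (le_of_eq (by simp [Polynomial.natDegree_X_sub_C]))
    have hcard : (insert i s).card * K = K + s.card * K := by
      rw [Finset.card_insert_of_notMem hi]; ring
    rw [Finset.prod_insert hi, hcard,
      Polynomial.reflect_mul _ _ (le_of_eq (by simp [Polynomial.natDegree_X_sub_C])) hdeg,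
      reflect_X_sub_C_pow, ih, Finset.prod_insert hi]

def Ppoly (K L : ℕ) (ℓ : Fin L) : Polynomial ℚ :=
  ∏ p ∈ Finset.univ.erase ℓ, (Polynomial.X - Polynomial.C ((p : ℕ) : ℚ)) ^ K

def Qpoly (K L : ℕ) (ℓ : Fin L) : Polynomial ℚ :=
  ∑ k ∈ Finset.range K, Polynomial.C (hpCoeff K L ℓ k) *
    (Polynomial.X - Polynomial.C ((ℓ : ℕ) : ℚ)) ^ (K - 1 - k)

lemma fin_cast_inj (L : ℕ) : Function.Injective (fun ℓ : Fin L => ((ℓ : ℕ) : ℚ)) := by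
  intro a b h
  exact Fin.ext (Nat.cast_injective h)

/-- The truncated inverse polynomial `Tq`. -/
def Tq (K L : ℕ) (ℓ : Fin L) : Polynomial ℚ :=
  ∑ k ∈ Finset.range K, Polynomial.C (hpCoeff K L ℓ k) * Polynomial.X ^ (K - 1 - k)

lemma coeff_Tq (K L : ℕ) (hK : 1 ≤ K) (ℓ : Fin L) (m : ℕ) (hm : m < K) :
    (Tq K L ℓ).coeff m = hpCoeff K L ℓ (K - 1 - m) := by
  rw [Tq, Polynomial.finset_sum_coeff]
  rw [Finset.sum_eq_single (K - 1 - m)]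
  · rw [Polynomial.coeff_C_mul, Polynomial.coeff_X_pow, if_pos (by omega), mul_one]
  · intro k hk hne
    rw [Polynomial.coeff_C_mul, Polynomial.coeff_X_pow, if_neg (by
      simp only [Finset.mem_range] at hk; omega), mul_zero]
  · intro h
    exact absurd (Finset.mem_range.2 (by omega)) h

lemma dvd_self_term (K L : ℕ) (hK : 1 ≤ K) (ℓ : Fin L) :
    (Polynomial.X - Polynomial.C ((ℓ : ℕ) : ℚ)) ^ K ∣ (Qpoly K L ℓ * Ppoly K L ℓ - 1) := by
  apply dvd_of_X_pow_dvd_taylor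
  set r : ℚ := ((ℓ : ℕ) : ℚ)
  -- compute the Taylor shift
  have hQ : Polynomial.taylor r (Qpoly K L ℓ) = Tq K L ℓ := by
    rw [Qpoly, Tq, map_sum]
    refine Finset.sum_congr rfl fun k _ => ?_
    rw [Polynomial.taylor_mul, Polynomial.taylor_C, taylor_pow', map_sub,
      Polynomial.taylor_X, Polynomial.taylor_C, add_sub_cancel_right]
  set Tp : Polynomial ℚ :=
    ∏ p ∈ Finset.univ.erase ℓ, (Polynomial.X + Polynomial.C (r - ((p : ℕ) : ℚ))) ^ K with hTpdef
  have hP : Polynomial.taylor r (Ppoly K L ℓ) = Tp := by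
    rw [Ppoly, taylor_prod']
    refine Finset.prod_congr rfl fun p _ => ?_
    rw [taylor_pow', map_sub, Polynomial.taylor_X, Polynomial.taylor_C, Polynomial.C_sub]
    ring_nf
  have htay : Polynomial.taylor r (Qpoly K L ℓ * Ppoly K L ℓ - 1)
      = Tq K L ℓ * Tp - 1 := by
    rw [map_sub, Polynomial.taylor_mul, hQ, hP, Polynomial.taylor_one, Polynomial.C_1]
  rw [htay]
  -- power series argument
  have hTpser : ((Tp : Polynomial ℚ) : PowerSeries ℚ)
      = ∏ p ∈ Finset.univ.erase ℓ,
          (PowerSeries.C (r - ((p : ℕ) : ℚ)) + PowerSeries.X) ^ K := by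
    rw [hTpdef, ← Polynomial.coeToPowerSeries.ringHom_apply, map_prod]
    refine Finset.prod_congr rfl fun p _ => ?_
    rw [map_pow, map_add, Polynomial.coeToPowerSeries.ringHom_apply,
      Polynomial.coeToPowerSeries.ringHom_apply, Polynomial.coe_X, Polynomial.coe_C, add_comm]
  have hHT : Hser K L ℓ * (Tp : PowerSeries ℚ) = 1 := by
    rw [hTpser, Hser, ← Finset.prod_mul_distrib]
    rw [← Finset.prod_const_one (s := Finset.univ.erase ℓ)]
    refine Finset.prod_congr rfl fun p hp => ?_
    have hpne : r - ((p : ℕ) : ℚ) ≠ 0 := by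
      rw [sub_ne_zero]
      intro h
      exact (Finset.mem_erase.1 hp).1 (fin_cast_inj L h.symm)
    exact geomK_mul_eq_one _ hpne K hK
  have hXdvd : (PowerSeries.X : PowerSeries ℚ) ^ K ∣ (Hser K L ℓ - (Tq K L ℓ : PowerSeries ℚ)) := by
    rw [PowerSeries.X_pow_dvd_iff]
    intro m hm
    rw [map_sub, Polynomial.coeff_coe, coeff_Hser K L hK ℓ m (by omega),
      coeff_Tq K L hK ℓ m hm, sub_self]
  rw [Polynomial.X_pow_dvd_iff]
  intro d hd
  have h2 : ((Tq K L ℓ * Tp : Polynomial ℚ) : PowerSeries ℚ)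
      = 1 - (Hser K L ℓ - (Tq K L ℓ : PowerSeries ℚ)) * (Tp : PowerSeries ℚ) := by
    rw [Polynomial.coe_mul, sub_mul, hHT]; ring
  have h3 : (Tq K L ℓ * Tp).coeff d = PowerSeries.coeff d ((Tq K L ℓ * Tp : Polynomial ℚ) : PowerSeries ℚ) :=
    (Polynomial.coeff_coe _ _).symm
  have h4 : PowerSeries.coeff d ((Hser K L ℓ - (Tq K L ℓ : PowerSeries ℚ)) * (Tp : PowerSeries ℚ)) = 0 :=
    PowerSeries.X_pow_dvd_iff.1 (hXdvd.mul_right _) d hd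
  rw [Polynomial.coeff_sub, h3, h2, map_sub, h4, sub_zero, PowerSeries.coeff_one,
    Polynomial.coeff_one, sub_self]

lemma main_star (K L : ℕ) (hK : 1 ≤ K) (hL : 1 ≤ L) :
    ∑ ℓ : Fin L, Qpoly K L ℓ * Ppoly K L ℓ = 1 := by
  set F : Polynomial ℚ := (∑ ℓ : Fin L, Qpoly K L ℓ * Ppoly K L ℓ) - 1 with hF
  have hdvd : ∀ ℓ₀ : Fin L, (Polynomial.X - Polynomial.C ((ℓ₀ : ℕ) : ℚ)) ^ K ∣ F := by
    intro ℓ₀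
    have hsplit : F = (Qpoly K L ℓ₀ * Ppoly K L ℓ₀ - 1)
        + ∑ ℓ ∈ Finset.univ.erase ℓ₀, Qpoly K L ℓ * Ppoly K L ℓ := by
      rw [hF, ← Finset.add_sum_erase Finset.univ _ (Finset.mem_univ ℓ₀)]; ring
    rw [hsplit]
    refine dvd_add (dvd_self_term K L hK ℓ₀) (Finset.dvd_sum fun ℓ hℓ => ?_)
    have hmem : ℓ₀ ∈ Finset.univ.erase ℓ := by
      rw [Finset.mem_erase]
      exact ⟨fun h => (Finset.mem_erase.1 hℓ).1 h.symm, Finset.mem_univ _⟩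
    refine Dvd.dvd.mul_left ?_ _
    rw [Ppoly]
    exact Finset.dvd_prod_of_mem _ hmem
  have hprod : (∏ ℓ : Fin L, (Polynomial.X - Polynomial.C ((ℓ : ℕ) : ℚ)) ^ K) ∣ F := by
    refine Fintype.prod_dvd_of_coprime ?_ hdvd
    intro a b hab
    exact ((Polynomial.pairwise_coprime_X_sub_C (fin_cast_inj L)) hab).pow
  by_contra hne
  have hFne : F ≠ 0 := fun h => hne (sub_eq_zero.1 h)
  have hdegF : F.natDegree ≤ K * L - 1 := by
    rw [hF]
    refine le_trans (Polynomial.natDegree_sub_le _ _) ?_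
    rw [Polynomial.natDegree_one]
    refine max_le (Polynomial.natDegree_sum_le_of_forall_le _ _ fun ℓ _ => ?_) (by omega)
    refine le_trans Polynomial.natDegree_mul_le ?_
    have hQ : (Qpoly K L ℓ).natDegree ≤ K - 1 := by
      refine Polynomial.natDegree_sum_le_of_forall_le _ _ fun k _ => ?_
      refine le_trans Polynomial.natDegree_mul_le ?_
      rw [Polynomial.natDegree_C, zero_add, Polynomial.natDegree_pow,
        Polynomial.natDegree_X_sub_C, mul_one]
      omega
    have hP : (Ppoly K L ℓ).natDegree ≤ (L - 1) * K := by
      rw [Ppoly]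
      refine le_trans (Polynomial.natDegree_prod_le _ _) ?_
      refine le_trans (Finset.sum_le_sum (g := fun _ => K) fun p _ => le_of_eq (by
        rw [Polynomial.natDegree_pow, Polynomial.natDegree_X_sub_C, mul_one])) ?_
      rw [Finset.sum_const, smul_eq_mul, Finset.card_erase_of_mem (Finset.mem_univ _),
        Finset.card_univ, Fintype.card_fin]
    have := add_le_add hQ hP
    refine le_trans this ?_
    have h1 : (L - 1) * K = L * K - K := by
      cases L with
      | zero => omega
      | succ n => simp [Nat.succ_sub_one, Nat.succ_mul]
    have h2 : K ≤ L * K := Nat.le_mul_of_pos_left _ (by omega)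
    have h3 : K * L = L * K := Nat.mul_comm K L
    omega
  have hdegProd : (∏ ℓ : Fin L, (Polynomial.X - Polynomial.C ((ℓ : ℕ) : ℚ)) ^ K).natDegree
      = K * L := by
    rw [Polynomial.natDegree_prod _ _ (fun ℓ _ => pow_ne_zero _ (Polynomial.X_sub_C_ne_zero _))]
    have hdeg : ∀ ℓ : Fin L, ((Polynomial.X - Polynomial.C ((ℓ : ℕ) : ℚ)) ^ K).natDegree = K :=
      fun ℓ => by rw [Polynomial.natDegree_pow, Polynomial.natDegree_X_sub_C, mul_one]
    rw [Finset.sum_congr rfl fun ℓ _ => hdeg ℓ, Finset.sum_const, Finset.card_univ,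
      Fintype.card_fin, smul_eq_mul, mul_comm]
  have := Polynomial.natDegree_le_of_dvd hprod hFne
  rw [hdegProd] at this
  have hKL : 1 ≤ K * L := Nat.one_le_iff_ne_zero.2 (by positivity)
  omega

lemma reflect_sum' {ι : Type*} (N : ℕ) (s : Finset ι) (f : ι → Polynomial ℚ) :
    Polynomial.reflect N (∑ i ∈ s, f i) = ∑ i ∈ s, Polynomial.reflect N (f i) := by
  classical
  induction s using Finset.induction_on with
  | empty => simp [Polynomial.reflect_zero]
  | @insert _ _ h ih => rw [Finset.sum_insert h, Polynomial.reflect_add, ih, Finset.sum_insert h]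

lemma reflect_C' (a : ℚ) (N : ℕ) :
    Polynomial.reflect N (Polynomial.C a) = Polynomial.C a * Polynomial.X ^ N := by
  have h : (Polynomial.C a : Polynomial ℚ) = Polynomial.C a * Polynomial.X ^ 0 := by simp
  conv_lhs => rw [h]
  rw [Polynomial.reflect_C_mul, Polynomial.reflect_monomial,
    Polynomial.revAt_le (Nat.zero_le N), Nat.sub_zero]

lemma main_reflected (K L : ℕ) (hK : 1 ≤ K) (hL : 1 ≤ L) :
    (Polynomial.X : Polynomial ℚ) ^ (K * L) =
      ∑ ℓ : Fin L, ∑ k ∈ Finset.range K, Polynomial.C (hpCoeff K L ℓ k) *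
        Polynomial.X ^ (k + 1) *
        ((1 - Polynomial.C ((ℓ : ℕ) : ℚ) * Polynomial.X) ^ (K - 1 - k) *
          ∏ p ∈ Finset.univ.erase ℓ, (1 - Polynomial.C ((p : ℕ) : ℚ) * Polynomial.X) ^ K) := by
  have h := main_star K L hK hL
  have h0 : (Polynomial.X : Polynomial ℚ) ^ (K * L)
      = Polynomial.reflect (K * L) (1 : Polynomial ℚ) := by
    have : (1 : Polynomial ℚ) = Polynomial.X ^ 0 := by simp
    rw [this, Polynomial.reflect_monomial, Polynomial.revAt_le (Nat.zero_le _), Nat.sub_zero]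
  conv_lhs => rw [h0, ← h]
  rw [reflect_sum']
  refine Finset.sum_congr rfl fun ℓ _ => ?_
  rw [Qpoly, Finset.sum_mul, reflect_sum']
  refine Finset.sum_congr rfl fun k hk => ?_
  have hkK : k < K := Finset.mem_range.1 hk
  have hsplit : K * L = (k + 1) + ((K - 1 - k) + (L - 1) * K) := by
    have h1 : (L - 1) * K = L * K - K := by
      cases L with
      | zero => omega
      | succ n => simp [Nat.succ_sub_one, Nat.succ_mul]
    have h2 : K ≤ L * K := Nat.le_mul_of_pos_left _ (by omega)
    have h3 : K * L = L * K := Nat.mul_comm K L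
    omega
  have hdB : ((Polynomial.X - Polynomial.C ((ℓ : ℕ) : ℚ)) ^ (K - 1 - k)).natDegree ≤ K - 1 - k := by
    refine le_trans Polynomial.natDegree_pow_le (le_of_eq ?_)
    rw [Polynomial.natDegree_X_sub_C, mul_one]
  have hdP : (Ppoly K L ℓ).natDegree ≤ (L - 1) * K := by
    rw [Ppoly]
    refine le_trans (Polynomial.natDegree_prod_le _ _) ?_
    refine le_trans (Finset.sum_le_sum (g := fun _ => K) fun p _ => le_of_eq (by
      rw [Polynomial.natDegree_pow, Polynomial.natDegree_X_sub_C, mul_one])) ?_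
    rw [Finset.sum_const, smul_eq_mul, Finset.card_erase_of_mem (Finset.mem_univ _),
      Finset.card_univ, Fintype.card_fin]
  have hassoc : Polynomial.C (hpCoeff K L ℓ k) *
      (Polynomial.X - Polynomial.C ((ℓ : ℕ) : ℚ)) ^ (K - 1 - k) * Ppoly K L ℓ
      = Polynomial.C (hpCoeff K L ℓ k) *
        ((Polynomial.X - Polynomial.C ((ℓ : ℕ) : ℚ)) ^ (K - 1 - k) * Ppoly K L ℓ) := by ring
  rw [hassoc, hsplit,
    Polynomial.reflect_mul _ _ (F := k + 1)
      (by rw [Polynomial.natDegree_C]; omega) (le_trans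
      Polynomial.natDegree_mul_le (add_le_add hdB hdP)),
    Polynomial.reflect_mul _ _ hdB hdP, reflect_C' , reflect_X_sub_C_pow]
  have : Polynomial.reflect ((L - 1) * K) (Ppoly K L ℓ)
      = ∏ p ∈ Finset.univ.erase ℓ, (1 - Polynomial.C ((p : ℕ) : ℚ) * Polynomial.X) ^ K := by
    rw [Ppoly]
    have hcard : (L - 1) * K = (Finset.univ.erase ℓ).card * K := by
      rw [Finset.card_erase_of_mem (Finset.mem_univ _), Finset.card_univ, Fintype.card_fin]
    rw [hcard, reflect_prod_pow]
  rw [this]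

lemma one_sub_C_mul_X_ne_zero (a : ℚ) : (1 - PowerSeries.C a * PowerSeries.X) ≠ 0 := by
  intro h
  have := congrArg (PowerSeries.constantCoeff) h
  simp at this

lemma kernel_sum (K L : ℕ) (hK : 1 ≤ K) (hL : 1 ≤ L) (s : ℕ) (hs : s + 1 < K * L) :
    ∑ ℓ : Fin L, ∑ k ∈ Finset.range K,
      hpCoeff K L ℓ k * ((s.choose k : ℚ) * ((ℓ : ℕ) : ℚ) ^ (s - k)) = 0 := by
  set U : PowerSeries ℚ := ∏ p : Fin L, invSer ((p : ℕ) : ℚ) K with hU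
  -- cast the reflected identity to power series
  have hser : (PowerSeries.X : PowerSeries ℚ) ^ (K * L) =
      ∑ ℓ : Fin L, ∑ k ∈ Finset.range K, PowerSeries.C (hpCoeff K L ℓ k) *
        PowerSeries.X ^ (k + 1) *
        ((1 - PowerSeries.C ((ℓ : ℕ) : ℚ) * PowerSeries.X) ^ (K - 1 - k) *
          ∏ p ∈ Finset.univ.erase ℓ,
            (1 - PowerSeries.C ((p : ℕ) : ℚ) * PowerSeries.X) ^ K) := by
    have h := congrArg (Polynomial.coeToPowerSeries.ringHom (R := ℚ)) (main_reflected K L hK hL)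
    simp only [map_pow, map_sum, map_mul, map_sub, map_prod, map_one,
      Polynomial.coeToPowerSeries.ringHom_apply, Polynomial.coe_X, Polynomial.coe_C] at h
    exact h
  -- simplify each summand times U
  have hterm : ∀ (ℓ : Fin L) (k : ℕ), k < K →
      ((1 - PowerSeries.C ((ℓ : ℕ) : ℚ) * PowerSeries.X) ^ (K - 1 - k) *
          ∏ p ∈ Finset.univ.erase ℓ,
            (1 - PowerSeries.C ((p : ℕ) : ℚ) * PowerSeries.X) ^ K) * U
        = invSer ((ℓ : ℕ) : ℚ) (k + 1) := by
    intro ℓ k hk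
    have hUsplit : U = invSer ((ℓ : ℕ) : ℚ) K * ∏ p ∈ Finset.univ.erase ℓ,
        invSer ((p : ℕ) : ℚ) K := by
      rw [hU, ← Finset.mul_prod_erase Finset.univ _ (Finset.mem_univ ℓ)]
    have hcancel : (∏ p ∈ Finset.univ.erase ℓ,
          (1 - PowerSeries.C ((p : ℕ) : ℚ) * PowerSeries.X) ^ K) *
        (∏ p ∈ Finset.univ.erase ℓ, invSer ((p : ℕ) : ℚ) K) = 1 := by
      rw [← Finset.prod_mul_distrib]
      refine Finset.prod_eq_one fun p _ => ?_
      rw [mul_comm]; exact invSer_mul_eq_one _ _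
    have h1 : ((1 - PowerSeries.C ((ℓ : ℕ) : ℚ) * PowerSeries.X) ^ (K - 1 - k) *
          ∏ p ∈ Finset.univ.erase ℓ,
            (1 - PowerSeries.C ((p : ℕ) : ℚ) * PowerSeries.X) ^ K) * U
        = (1 - PowerSeries.C ((ℓ : ℕ) : ℚ) * PowerSeries.X) ^ (K - 1 - k) *
            invSer ((ℓ : ℕ) : ℚ) K := by
      rw [hUsplit]
      calc ((1 - PowerSeries.C ((ℓ : ℕ) : ℚ) * PowerSeries.X) ^ (K - 1 - k) *
          ∏ p ∈ Finset.univ.erase ℓ,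
            (1 - PowerSeries.C ((p : ℕ) : ℚ) * PowerSeries.X) ^ K) *
          (invSer ((ℓ : ℕ) : ℚ) K * ∏ p ∈ Finset.univ.erase ℓ, invSer ((p : ℕ) : ℚ) K)
          = ((1 - PowerSeries.C ((ℓ : ℕ) : ℚ) * PowerSeries.X) ^ (K - 1 - k) *
              invSer ((ℓ : ℕ) : ℚ) K) *
            ((∏ p ∈ Finset.univ.erase ℓ,
              (1 - PowerSeries.C ((p : ℕ) : ℚ) * PowerSeries.X) ^ K) *
             (∏ p ∈ Finset.univ.erase ℓ, invSer ((p : ℕ) : ℚ) K)) := by ring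
        _ = _ := by rw [hcancel, mul_one]
    rw [h1]
    -- cancellation argument
    have hne : ((1 - PowerSeries.C ((ℓ : ℕ) : ℚ) * PowerSeries.X) ^ (k + 1)) ≠ 0 :=
      pow_ne_zero _ (one_sub_C_mul_X_ne_zero _)
    apply mul_left_cancel₀ hne
    have hpowsplit : (k + 1) + (K - 1 - k) = K := by omega
    calc (1 - PowerSeries.C ((ℓ : ℕ) : ℚ) * PowerSeries.X) ^ (k + 1) *
        ((1 - PowerSeries.C ((ℓ : ℕ) : ℚ) * PowerSeries.X) ^ (K - 1 - k) *
          invSer ((ℓ : ℕ) : ℚ) K)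
        = invSer ((ℓ : ℕ) : ℚ) K *
            (1 - PowerSeries.C ((ℓ : ℕ) : ℚ) * PowerSeries.X) ^ ((k + 1) + (K - 1 - k)) := by
          rw [pow_add]; ring
      _ = 1 := by rw [hpowsplit, invSer_mul_eq_one]
      _ = invSer ((ℓ : ℕ) : ℚ) (k + 1) *
            (1 - PowerSeries.C ((ℓ : ℕ) : ℚ) * PowerSeries.X) ^ (k + 1) := by
          rw [invSer_mul_eq_one]
      _ = (1 - PowerSeries.C ((ℓ : ℕ) : ℚ) * PowerSeries.X) ^ (k + 1) *
            invSer ((ℓ : ℕ) : ℚ) (k + 1) := by ring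
  -- multiply the identity by U and take coefficients
  have hmain : (PowerSeries.X : PowerSeries ℚ) ^ (K * L) * U
      = ∑ ℓ : Fin L, ∑ k ∈ Finset.range K, PowerSeries.C (hpCoeff K L ℓ k) *
          (PowerSeries.X ^ (k + 1) * invSer ((ℓ : ℕ) : ℚ) (k + 1)) := by
    rw [hser, Finset.sum_mul]
    refine Finset.sum_congr rfl fun ℓ _ => ?_
    rw [Finset.sum_mul]
    refine Finset.sum_congr rfl fun k hk => ?_
    rw [← hterm ℓ k (Finset.mem_range.1 hk)]
    ring
  have hcoeffL : PowerSeries.coeff (s + 1) ((PowerSeries.X : PowerSeries ℚ) ^ (K * L) * U)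
      = 0 := by
    refine PowerSeries.X_pow_dvd_iff.1 (dvd_mul_right _ _) (s + 1) hs
  rw [hmain] at hcoeffL
  rw [map_sum] at hcoeffL
  rw [← hcoeffL]
  refine Finset.sum_congr rfl fun ℓ _ => ?_
  rw [map_sum]
  refine Finset.sum_congr rfl fun k hk => ?_
  rw [PowerSeries.coeff_C_mul]
  congr 1
  by_cases hks : k ≤ s
  · have hsk : s + 1 = (s - k) + (k + 1) := by omega
    rw [hsk, PowerSeries.coeff_X_pow_mul, coeff_invSer _ _ (by omega)]
    have : (k + 1) - 1 + (s - k) = s := by omega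
    rw [this]
    have h2 : (k + 1) - 1 = k := by omega
    rw [h2, mul_comm]
  · have h0 : (s.choose k : ℚ) = 0 := by
      rw [Nat.choose_eq_zero_of_lt (by omega)]; simp
    rw [h0, zero_mul]
    -- coefficient vanishes because s + 1 < k + 1
    have hdvd : (PowerSeries.X : PowerSeries ℚ) ^ (k + 1) ∣
        PowerSeries.X ^ (k + 1) * invSer ((ℓ : ℕ) : ℚ) (k + 1) := dvd_mul_right _ _
    exact (PowerSeries.X_pow_dvd_iff.1 hdvd (s + 1) (by omega)).symm ▸ rfl


lemma m0_entry_eq (s k ℓ : ℕ) : m0Entry s k ℓ = s.choose k * k.factorial * ℓ ^ (s - k) := by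
  rw [m0Entry]
  split
  · rfl
  · rw [Nat.choose_eq_zero_of_lt (by omega)]; simp

lemma hp_top_ne_zero (K L : ℕ) (hK : 1 ≤ K) (ℓ : Fin L) :
    hpCoeff K L ℓ (K - 1) ≠ 0 := by
  rw [hpCoeff, lambdaSet]
  have h0 : K - (K - 1) - 1 = 0 := by omega
  rw [h0, Finset.Nat.antidiagonalTuple_zero_right]
  have hfil : ({0} : Finset (Fin L → ℕ)).filter (fun γ => γ ℓ = 0) = {0} := by
    rw [Finset.filter_eq_self]
    intro γ hγ
    rw [Finset.mem_singleton] at hγ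
    subst hγ
    rfl
  rw [hfil, Finset.sum_singleton]
  refine Finset.prod_ne_zero_iff.2 fun p hp => ?_
  have hc : (((ℓ : ℕ) : ℚ) - ((p : ℕ) : ℚ)) ≠ 0 :=
    sub_ne_zero.2 fun h => (Finset.mem_erase.1 hp).1 (fin_cast_inj L h).symm
  simp only [Pi.zero_apply, pow_zero, zero_add, Nat.choose_self, Nat.cast_one, mul_one, one_div]
  exact inv_ne_zero (pow_ne_zero _ hc)

lemma rank_m0 (K L : ℕ) (hK : 1 ≤ K) (hL : 1 ≤ L) : (m0Mat K L).rank = K * L - 1 := by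
  rw [← Matrix.rank_transpose]
  have hinj : Function.Injective ((m0Mat K L).transpose.mulVecLin) := by
    rw [← LinearMap.ker_eq_bot, LinearMap.ker_eq_bot']
    intro c hc
    have hsum : ∀ kl : Fin K × Fin L,
        ∑ t : Fin (K * L - 1), c t * m0Mat K L t kl = 0 := by
      intro kl
      have h := congrFun hc kl
      simpa [Matrix.mulVecLin_apply, Matrix.mulVec, Matrix.vecMul, dotProduct,
        Matrix.transpose_apply] using h
    set f : Polynomial ℚ := ∑ t : Fin (K * L - 1), Polynomial.C (c t) * Polynomial.X ^ (t : ℕ)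
      with hf
    have hcoeff : ∀ (ℓ : Fin L) (k : ℕ), k < K →
        (Polynomial.taylor ((ℓ : ℕ) : ℚ) f).coeff k = 0 := by
      intro ℓ k hk
      rw [Polynomial.taylor_coeff]
      have hh : Polynomial.hasseDeriv k f = ∑ t : Fin (K * L - 1),
          Polynomial.monomial ((t : ℕ) - k) ((((t : ℕ).choose k : ℚ)) * c t) := by
        rw [hf, map_sum]
        refine Finset.sum_congr rfl fun t _ => ?_
        rw [Polynomial.C_mul_X_pow_eq_monomial, Polynomial.hasseDeriv_monomial]
      rw [hh, Polynomial.eval_finset_sum]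
      have hev : ∀ t : Fin (K * L - 1),
          Polynomial.eval ((ℓ : ℕ) : ℚ)
            (Polynomial.monomial ((t : ℕ) - k) ((((t : ℕ).choose k : ℚ)) * c t))
          = ((t : ℕ).choose k : ℚ) * c t * ((ℓ : ℕ) : ℚ) ^ ((t : ℕ) - k) := fun t => by
        rw [Polynomial.eval_monomial]
      rw [Finset.sum_congr rfl fun t _ => hev t]
      have hEntry := hsum (⟨k, hk⟩, ℓ)
      have hfac : ((k.factorial : ℚ)) ≠ 0 := Nat.cast_ne_zero.2 (Nat.factorial_ne_zero k)
      have h2 : (k.factorial : ℚ) * ∑ t : Fin (K * L - 1),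
          ((t : ℕ).choose k : ℚ) * c t * ((ℓ : ℕ) : ℚ) ^ ((t : ℕ) - k) = 0 := by
        rw [Finset.mul_sum, ← hEntry]
        refine Finset.sum_congr rfl fun t _ => ?_
        have hm : m0Mat K L t (⟨k, hk⟩, ℓ)
            = (((t : ℕ).choose k * k.factorial * (ℓ : ℕ) ^ ((t : ℕ) - k) : ℕ) : ℚ) := by
          simp [m0Mat, m0_entry_eq]
        rw [hm]
        push_cast
        ring
      exact (mul_eq_zero.1 h2).resolve_left hfac
    have hdvd : ∀ ℓ : Fin L, (Polynomial.X - Polynomial.C ((ℓ : ℕ) : ℚ)) ^ K ∣ f := by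
      intro ℓ
      refine dvd_of_X_pow_dvd_taylor _ _ _ ?_
      rw [Polynomial.X_pow_dvd_iff]
      exact fun d hd => hcoeff ℓ d hd
    have hprod : (∏ ℓ : Fin L, (Polynomial.X - Polynomial.C ((ℓ : ℕ) : ℚ)) ^ K) ∣ f := by
      refine Fintype.prod_dvd_of_coprime ?_ hdvd
      intro a b hab
      exact ((Polynomial.pairwise_coprime_X_sub_C (fin_cast_inj L)) hab).pow
    have hdegf : f.natDegree ≤ K * L - 1 := by
      rw [hf]
      refine Polynomial.natDegree_sum_le_of_forall_le _ _ fun t _ => ?_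
      refine le_trans Polynomial.natDegree_mul_le ?_
      rw [Polynomial.natDegree_C, zero_add, Polynomial.natDegree_X_pow]
      have := t.isLt
      omega
    have hzero : f = 0 := by
      by_contra hne
      have hdegProd : (∏ ℓ : Fin L, (Polynomial.X - Polynomial.C ((ℓ : ℕ) : ℚ)) ^ K).natDegree
          = K * L := by
        rw [Polynomial.natDegree_prod _ _
          (fun ℓ _ => pow_ne_zero _ (Polynomial.X_sub_C_ne_zero _))]
        have hdg : ∀ ℓ : Fin L,
            ((Polynomial.X - Polynomial.C ((ℓ : ℕ) : ℚ)) ^ K).natDegree = K :=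
          fun ℓ => by rw [Polynomial.natDegree_pow, Polynomial.natDegree_X_sub_C, mul_one]
        rw [Finset.sum_congr rfl fun ℓ _ => hdg ℓ, Finset.sum_const, Finset.card_univ,
          Fintype.card_fin, smul_eq_mul, mul_comm]
      have h := Polynomial.natDegree_le_of_dvd hprod hne
      rw [hdegProd] at h
      have hKL : 1 ≤ K * L := Nat.one_le_iff_ne_zero.2 (by positivity)
      omega
    funext t
    have hcoefft : f.coeff (t : ℕ) = c t := by
      rw [hf, Polynomial.finset_sum_coeff, Finset.sum_eq_single t]
      · rw [Polynomial.coeff_C_mul, Polynomial.coeff_X_pow, if_pos rfl, mul_one]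
      · intro b _ hb
        rw [Polynomial.coeff_C_mul, Polynomial.coeff_X_pow,
          if_neg (fun h => hb (Fin.ext h.symm)), mul_zero]
      · intro h
        exact absurd (Finset.mem_univ t) h
    rw [hzero] at hcoefft
    simpa using hcoefft.symm
  rw [Matrix.rank, LinearMap.finrank_range_of_inj hinj, Module.finrank_fin_fun]

theorem stmt13 (K L : ℕ) (hK : 1 ≤ K) (hL : 2 ≤ L) :
    (m0Mat K L).rank = K * L - 1 ∧
    (fun kl : Fin K × Fin L => hpCoeff K L kl.2 (kl.1 : ℕ) / ((kl.1 : ℕ).factorial : ℚ)) ≠ 0 ∧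
    ∀ s : Fin (K * L - 1),
      ∑ kl : Fin K × Fin L,
        (hpCoeff K L kl.2 (kl.1 : ℕ) / ((kl.1 : ℕ).factorial : ℚ)) * m0Mat K L s kl = 0 := by
  have hL1 : 1 ≤ L := by omega
  have hKL : 2 ≤ K * L := le_trans hL (Nat.le_mul_of_pos_left L (by omega))
  refine ⟨rank_m0 K L hK hL1, ?_, ?_⟩
  · intro h
    have h2 := congrFun h (⟨K - 1, by omega⟩, ⟨0, by omega⟩)
    simp only [Pi.zero_apply] at h2
    rw [div_eq_zero_iff] at h2
    rcases h2 with h2 | h2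
    · exact hp_top_ne_zero K L hK _ h2
    · exact Nat.cast_ne_zero.2 (Nat.factorial_ne_zero _) h2
  · intro s
    have hs1 : (s : ℕ) + 1 < K * L := by
      have := s.isLt
      omega
    have hker := kernel_sum K L hK hL1 (s : ℕ) hs1
    have hterm : ∀ (k : Fin K) (ℓ : Fin L),
        (hpCoeff K L ℓ (k : ℕ) / (((k : ℕ).factorial : ℚ))) * m0Mat K L s (k, ℓ)
        = hpCoeff K L ℓ (k : ℕ) *
            ((((s : ℕ).choose (k : ℕ) : ℚ)) * ((ℓ : ℕ) : ℚ) ^ ((s : ℕ) - (k : ℕ))) := by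
      intro k ℓ
      have hm : m0Mat K L s (k, ℓ)
          = ((((s : ℕ).choose (k : ℕ)) * (k : ℕ).factorial * (ℓ : ℕ) ^ ((s : ℕ) - (k : ℕ)) : ℕ) : ℚ) := by
        simp [m0Mat, m0_entry_eq]
      have hfac : (((k : ℕ).factorial : ℚ)) ≠ 0 := Nat.cast_ne_zero.2 (Nat.factorial_ne_zero _)
      rw [hm]
      push_cast
      field_simp
    calc ∑ kl : Fin K × Fin L,
        (hpCoeff K L kl.2 (kl.1 : ℕ) / (((kl.1 : ℕ).factorial : ℚ))) * m0Mat K L s kl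
        = ∑ k : Fin K, ∑ ℓ : Fin L, (hpCoeff K L ℓ (k : ℕ) / (((k : ℕ).factorial : ℚ)))
            * m0Mat K L s (k, ℓ) := Fintype.sum_prod_type _
      _ = ∑ ℓ : Fin L, ∑ k : Fin K, hpCoeff K L ℓ (k : ℕ) *
            ((((s : ℕ).choose (k : ℕ) : ℚ)) * ((ℓ : ℕ) : ℚ) ^ ((s : ℕ) - (k : ℕ))) := by
          rw [Finset.sum_comm]
          exact Finset.sum_congr rfl fun ℓ _ => Finset.sum_congr rfl fun k _ => hterm k ℓ
      _ = ∑ ℓ : Fin L, ∑ k ∈ Finset.range K, hpCoeff K L ℓ k *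
            ((((s : ℕ).choose k : ℚ)) * ((ℓ : ℕ) : ℚ) ^ ((s : ℕ) - k)) := by
          refine Finset.sum_congr rfl fun ℓ _ => ?_
          exact Fin.sum_univ_eq_sum_range
            (fun k => hpCoeff K L ℓ k *
              ((((s : ℕ).choose k : ℚ)) * ((ℓ : ℕ) : ℚ) ^ ((s : ℕ) - k))) K
      _ = 0 := hker
end
end

section
/- Let K ≥ 1 and L ≥ 2 be integers. For every 0 ≤ k ≤ K−1, the rational number D_{K−1,L−1}·d_{L−1}^{k}/k! is an integer. Consequently, for 0 ≤ k ≤ K−1 and 0 ≤ ℓ ≤ L−1, the number y_{ℓ,k} = ± (D_{K−1,L−1}/k!)·d_{L−1}^{K−1}·C(L−1,ℓ)^K · Σ_{γ ∈ Λ(ℓ,k)} ∏_{p=0, p≠ℓ}^{L−1} ((−1)^{γ_p}/(ℓ−p)^{γ_p})·C(γ_p+K−1, K−1) is an integer. -/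
open Finset


/-- `d_n = lcm(1, …, n)` (with `d_0 = 1`). -/
def dlcm (n : ℕ) : ℕ := (Finset.Icc 1 n).lcm id

/-- `D_{m,n} = m! / ∏_{q prime, q ≤ n} q^{v_q(m!)}`. -/
def Dmn (m n : ℕ) : ℕ :=
  m.factorial / ∏ q ∈ (Finset.range (n + 1)).filter Nat.Prime,
    q ^ (m.factorial.factorization q)

lemma dlcm_ne_zero (n : ℕ) : dlcm n ≠ 0 := by
  rw [dlcm, Ne, Finset.lcm_eq_zero_iff]
  rintro ⟨i, hi, h0⟩
  simp only [mem_coe, Finset.mem_Icc, id] at hi h0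
  omega

lemma dvd_dlcm {i n : ℕ} (h1 : 1 ≤ i) (h2 : i ≤ n) : i ∣ dlcm n :=
  Finset.dvd_lcm (by simp [Finset.mem_Icc, h1, h2])

lemma prodP_dvd (m n : ℕ) :
    (∏ q ∈ (Finset.range (n + 1)).filter Nat.Prime, q ^ (m.factorial.factorization q))
      ∣ m.factorial := by
  have hfac : m.factorial ≠ 0 := Nat.factorial_ne_zero m
  set B := m.factorial + n + 2 with hB
  have hlt : m.factorial < B := by omega
  have hfull := Nat.prod_pow_prime_padicValNat m.factorial hfac B hlt
  have hsub : (Finset.range (n + 1)).filter Nat.Prime ⊆ (Finset.range B).filter Nat.Prime := by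
    apply Finset.filter_subset_filter
    intro x hx
    simp only [Finset.mem_range] at hx ⊢
    omega
  calc (∏ q ∈ (Finset.range (n + 1)).filter Nat.Prime, q ^ (m.factorial.factorization q))
      ∣ ∏ q ∈ (Finset.range B).filter Nat.Prime, q ^ (m.factorial.factorization q) :=
        Finset.prod_dvd_prod_of_subset _ _ _ hsub
    _ = ∏ q ∈ (Finset.range B).filter Nat.Prime, q ^ padicValNat q m.factorial :=
        Finset.prod_congr rfl fun q hq => by
          simp only [Finset.mem_filter] at hq
          rw [Nat.factorization_def _ hq.2]
    _ = m.factorial := hfull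

lemma Dmn_ne_zero (m n : ℕ) : Dmn m n ≠ 0 := by
  rw [Dmn]
  exact Nat.div_ne_zero_iff_of_dvd (prodP_dvd m n) |>.mpr
    ⟨Nat.factorial_ne_zero m, Finset.prod_ne_zero_iff.mpr fun q hq => by
      simp only [Finset.mem_filter] at hq
      exact pow_ne_zero _ hq.2.pos.ne'⟩

lemma valfact_le {p k : ℕ} (hp : p.Prime) : (k.factorial).factorization p ≤ k := by
  haveI : Fact p.Prime := ⟨hp⟩
  rw [Nat.factorization_def _ hp]
  have h := sub_one_mul_padicValNat_factorial (p := p) k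
  have hp1 : 1 ≤ p - 1 := by have := hp.two_le; omega
  nlinarith [Nat.le_of_eq h.symm, Nat.sub_le k (p.digits k).sum,
    Nat.le_mul_of_pos_left (padicValNat p k.factorial) (by omega : 0 < p - 1)]

lemma key_dvd (m n k : ℕ) (hk : k ≤ m) : k.factorial ∣ Dmn m n * dlcm n ^ k := by
  have hD := Dmn_ne_zero m n
  have hne : Dmn m n * dlcm n ^ k ≠ 0 :=
    mul_ne_zero hD (pow_ne_zero _ (dlcm_ne_zero n))
  rw [← Nat.factorization_le_iff_dvd (Nat.factorial_ne_zero k) hne]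
  intro q
  rcases em q.Prime with hq | hq
  swap
  · simp [Nat.factorization_eq_zero_of_not_prime _ hq]
  rw [Nat.factorization_mul hD (pow_ne_zero _ (dlcm_ne_zero n)), Nat.factorization_pow]
  simp only [Finsupp.coe_add, Finsupp.coe_smul, Pi.add_apply, Pi.smul_apply, smul_eq_mul]
  rcases le_or_gt q n with hqn | hqn
  · -- q ≤ n : use d
    have h1 : 1 ≤ (dlcm n).factorization q := by
      rw [← Nat.Prime.pow_dvd_iff_le_factorization hq (dlcm_ne_zero n), pow_one]
      exact dvd_dlcm hq.one_lt.le hqn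
    calc (k.factorial).factorization q ≤ k := valfact_le hq
      _ ≤ k * (dlcm n).factorization q := Nat.le_mul_of_pos_right k (by omega)
      _ ≤ _ := Nat.le_add_left _ _
  · -- q > n
    have hP : ¬ q ∣ ∏ r ∈ (Finset.range (n + 1)).filter Nat.Prime,
        r ^ (m.factorial.factorization r) := by
      rw [hq.prime.dvd_finset_prod_iff]
      rintro ⟨r, hr, hdvd⟩
      simp only [Finset.mem_filter, Finset.mem_range] at hr
      have := (Nat.prime_dvd_prime_iff_eq hq hr.2).mp (hq.dvd_of_dvd_pow hdvd)
      omega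
    have hPval : (∏ r ∈ (Finset.range (n + 1)).filter Nat.Prime,
        r ^ (m.factorial.factorization r)).factorization q = 0 :=
      Nat.factorization_eq_zero_of_not_dvd hP
    have hDval : (Dmn m n).factorization q = (m.factorial).factorization q := by
      rw [Dmn, Nat.factorization_div (prodP_dvd m n)]
      simp [hPval]
    have hkm : (k.factorial).factorization q ≤ (m.factorial).factorization q := by
      exact (Nat.factorization_le_iff_dvd (Nat.factorial_ne_zero k)
        (Nat.factorial_ne_zero m)).mpr (Nat.factorial_dvd_factorial hk) q
    omega

theorem stmt14 (K L : ℕ) (hK : 1 ≤ K) (hL : 2 ≤ L) :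
    (∀ k ≤ K - 1, ∃ z : ℤ,
      ((Dmn (K - 1) (L - 1) : ℚ) * (dlcm (L - 1) : ℚ) ^ k / (k.factorial : ℚ)) = (z : ℚ)) ∧
    (∀ k ≤ K - 1, ∀ ℓ : Fin L, ∃ z : ℤ,
      (Dmn (K - 1) (L - 1) : ℚ) / (k.factorial : ℚ) * (dlcm (L - 1) : ℚ) ^ (K - 1) *
          (((L - 1).choose (ℓ : ℕ) : ℚ)) ^ K *
          ∑ γ ∈ lambdaSet K L ℓ k, ∏ p ∈ Finset.univ.erase ℓ,
            ((-1) ^ (γ p) / (((ℓ : ℕ) : ℚ) - ((p : ℕ) : ℚ)) ^ (γ p) *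
              ((γ p + K - 1).choose (K - 1) : ℚ)) = (z : ℚ)) := by
  have hpart1 : ∀ k ≤ K - 1,
      ((Dmn (K - 1) (L - 1) : ℚ) * (dlcm (L - 1) : ℚ) ^ k / (k.factorial : ℚ))
        = ((Dmn (K - 1) (L - 1) * dlcm (L - 1) ^ k / k.factorial : ℕ) : ℚ) := by
    intro k hk
    rw [Nat.cast_div_charZero (key_dvd (K - 1) (L - 1) k hk)]
    push_cast
    ring
  constructor
  · intro k hk
    exact ⟨((Dmn (K - 1) (L - 1) * dlcm (L - 1) ^ k / k.factorial : ℕ) : ℤ),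
      by exact_mod_cast hpart1 k hk⟩
  · intro k hk ℓ
    set S : Subring ℚ := (Int.castRingHom ℚ).range with hS
    have hnat : ∀ n : ℕ, ((n : ℚ) ∈ S) := fun n => ⟨(n : ℤ), by simp⟩
    suffices h : ((Dmn (K - 1) (L - 1) : ℚ) / (k.factorial : ℚ) * (dlcm (L - 1) : ℚ) ^ (K - 1) *
          (((L - 1).choose (ℓ : ℕ) : ℚ)) ^ K *
          ∑ γ ∈ lambdaSet K L ℓ k, ∏ p ∈ Finset.univ.erase ℓ,
            ((-1) ^ (γ p) / (((ℓ : ℕ) : ℚ) - ((p : ℕ) : ℚ)) ^ (γ p) *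
              ((γ p + K - 1).choose (K - 1) : ℚ))) ∈ S by
      obtain ⟨z, hz⟩ := h
      exact ⟨z, hz.symm⟩
    set d : ℕ := dlcm (L - 1) with hd
    set e : ℕ := K - k - 1 with he
    have hsplit : K - 1 = k + e := by omega
    have hE : (Dmn (K - 1) (L - 1) : ℚ) / (k.factorial : ℚ) * (d : ℚ) ^ (K - 1) *
          (((L - 1).choose (ℓ : ℕ) : ℚ)) ^ K *
          ∑ γ ∈ lambdaSet K L ℓ k, ∏ p ∈ Finset.univ.erase ℓ,
            ((-1) ^ (γ p) / (((ℓ : ℕ) : ℚ) - ((p : ℕ) : ℚ)) ^ (γ p) *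
              ((γ p + K - 1).choose (K - 1) : ℚ))
        = ((Dmn (K - 1) (L - 1) : ℚ) * (d : ℚ) ^ k / (k.factorial : ℚ)) *
            ((((L - 1).choose (ℓ : ℕ) : ℚ)) ^ K *
            ∑ γ ∈ lambdaSet K L ℓ k, (d : ℚ) ^ e * ∏ p ∈ Finset.univ.erase ℓ,
            ((-1) ^ (γ p) / (((ℓ : ℕ) : ℚ) - ((p : ℕ) : ℚ)) ^ (γ p) *
              ((γ p + K - 1).choose (K - 1) : ℚ))) := by
      rw [← Finset.mul_sum, hsplit, pow_add]
      ring
    rw [hE]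
    apply S.mul_mem
    · rw [hpart1 k hk]; exact hnat _
    apply S.mul_mem (S.pow_mem (hnat _) _)
    apply S.sum_mem
    intro γ hγ
    -- sum of γ over erase ℓ equals e
    simp only [lambdaSet, Finset.mem_filter, Finset.Nat.mem_antidiagonalTuple] at hγ
    obtain ⟨hγ1, hγ2⟩ := hγ
    have hγsum : ∑ p ∈ Finset.univ.erase ℓ, γ p = e := by
      have := Finset.add_sum_erase Finset.univ γ (Finset.mem_univ ℓ)
      rw [hγ2, zero_add] at this
      rw [this, hγ1]
    rw [← hγsum, ← Finset.prod_pow_eq_pow_sum, ← Finset.prod_mul_distrib]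
    apply S.prod_mem
    intro p hp
    have hpℓ : p ≠ ℓ := (Finset.mem_erase.mp hp).1
    have hvals : (p : ℕ) ≠ (ℓ : ℕ) := fun h => hpℓ (Fin.ext h)
    have hdvd : (((ℓ : ℕ) : ℤ) - ((p : ℕ) : ℤ)) ∣ (d : ℤ) := by
      have h1 : 1 ≤ (((ℓ : ℕ) : ℤ) - ((p : ℕ) : ℤ)).natAbs := by omega
      have h2 : (((ℓ : ℕ) : ℤ) - ((p : ℕ) : ℤ)).natAbs ≤ L - 1 := by
        have := ℓ.isLt; have := p.isLt; omega
      rw [← Int.natAbs_dvd]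
      exact_mod_cast dvd_dlcm h1 h2
    have hx : (((d : ℤ) / (((ℓ : ℕ) : ℤ) - ((p : ℕ) : ℤ)) : ℤ) : ℚ) = (d : ℚ) / (((ℓ : ℕ) : ℚ) - ((p : ℕ) : ℚ)) := by
      rw [Int.cast_div_charZero hdvd]
      push_cast
      ring
    have hfac : (d : ℚ) ^ (γ p) * ((-1) ^ (γ p) / (((ℓ : ℕ) : ℚ) - ((p : ℕ) : ℚ)) ^ (γ p) *
          ((γ p + K - 1).choose (K - 1) : ℚ))
        = (-1 : ℚ) ^ (γ p) * ((d : ℚ) / (((ℓ : ℕ) : ℚ) - ((p : ℕ) : ℚ))) ^ (γ p) *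
          ((γ p + K - 1).choose (K - 1) : ℚ) := by
      rw [div_pow]
      ring
    rw [hfac]
    exact S.mul_mem (S.mul_mem (S.pow_mem (S.neg_mem S.one_mem) _)
      (S.pow_mem ⟨(d : ℤ) / (((ℓ : ℕ) : ℤ) - ((p : ℕ) : ℤ)), hx⟩ _)) (hnat _)
end
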